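/- With $S$, $S_h$, and the lift $\hat f$ of a function $f$ on $S$ to $S_h$ as above, for $f \in W^{1,p}(S)$ and $g \in W^{1,p^*}(S)$ (with $1/p + 1/p^* = 1$) there holds $\int_S \langle Df, Dg\rangle = \int_{S_h} \langle D\hat f, D\hat g\rangle + O(h^2)\,\|f\|_{W^{1,p}(S)}\|g\|_{W^{1,p^*}(S)}$; moreover for $f \in L^1(S)$, $\int_S f = \int_{S_h} \hat f + O(h^2)\|f\|_{L^1(S)}$. -/

import Mathlib

open MeasureTheory

private lemma sqrt_close {lam c2 d1 d2 : ℝ} (hlam : 0 < lam) (hd1 : lam ^ 2 ≤ d1)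
    (hclose : |d1 - d2| ≤ c2) : |Real.sqrt d1 - Real.sqrt d2| ≤ c2 / lam := by
  have hd1' : (0:ℝ) ≤ d1 := le_trans (by positivity) hd1
  have hs1 : lam ≤ Real.sqrt d1 := by
    have : Real.sqrt (lam ^ 2) ≤ Real.sqrt d1 := Real.sqrt_le_sqrt hd1
    rwa [Real.sqrt_sq hlam.le] at this
  have hsq1 : Real.sqrt d1 ^ 2 = d1 := Real.sq_sqrt hd1'
  have habs := abs_le.mp hclose
  have hc2 : 0 ≤ c2 := le_trans (abs_nonneg _) hclose
  rcases le_or_gt d2 0 with h2 | h2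
  · rw [Real.sqrt_eq_zero'.mpr h2, sub_zero, abs_of_nonneg (Real.sqrt_nonneg _),
      le_div_iff₀ hlam]
    nlinarith [Real.sqrt_nonneg d1]
  · have hsq2 : Real.sqrt d2 ^ 2 = d2 := Real.sq_sqrt h2.le
    have hs2 : 0 ≤ Real.sqrt d2 := Real.sqrt_nonneg _
    rw [abs_le]
    have k1 : (Real.sqrt d1 - Real.sqrt d2) * lam ≤ c2 := by
      nlinarith [mul_nonneg (sub_nonneg.mpr hs1) hs2, sq_nonneg (Real.sqrt d1 - Real.sqrt d2)]
    have k2 : (Real.sqrt d2 - Real.sqrt d1) * lam ≤ c2 := by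
      nlinarith [mul_nonneg (sub_nonneg.mpr hs1) hs2, sq_nonneg (Real.sqrt d1 - Real.sqrt d2)]
    constructor
    · rw [neg_le]
      exact (le_div_iff₀ hlam).mpr (by linarith)
    · rw [le_div_iff₀ hlam]
      exact k1

private lemma young_t {a b p q t : ℝ} (ha : 0 ≤ a) (hb : 0 ≤ b)
    (hpq : p.HolderConjugate q) (ht : 0 < t) :
    a * b ≤ t ^ p * a ^ p + b ^ q / t ^ q := by
  have h := Real.young_inequality_of_nonneg (mul_nonneg ht.le ha)
    (div_nonneg hb ht.le) hpq
  have e0 : t * a * (b / t) = a * b := by field_simp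
  have e1 : (t * a) ^ p = t ^ p * a ^ p := Real.mul_rpow ht.le ha
  have e2 : (b / t) ^ q = b ^ q / t ^ q := Real.div_rpow hb ht.le q
  rw [e0, e1, e2] at h
  have hp1 : 1 ≤ p := hpq.lt.le
  have hq1 : 1 ≤ q := hpq.symm.lt.le
  have n1 : 0 ≤ t ^ p * a ^ p := mul_nonneg (Real.rpow_nonneg ht.le p) (Real.rpow_nonneg ha p)
  have n2 : 0 ≤ b ^ q / t ^ q := div_nonneg (Real.rpow_nonneg hb q) (Real.rpow_nonneg ht.le q)
  have d1 : t ^ p * a ^ p / p ≤ t ^ p * a ^ p := by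
    apply div_le_self n1 hp1
  have d2 : b ^ q / t ^ q / q ≤ b ^ q / t ^ q := div_le_self n2 hq1
  linarith

private lemma opt_bound {p q L X Y : ℝ} (hpq : p.HolderConjugate q)
    (hX : 0 ≤ X) (hY : 0 ≤ Y)
    (hL : ∀ t : ℝ, 0 < t → L ≤ t ^ p * X + Y / t ^ q) :
    L ≤ 2 * (X ^ (1 / p) * Y ^ (1 / q)) := by
  have hp0 : 0 < p := hpq.pos
  have hq0 : 0 < q := hpq.symm.pos
  have hconj : p⁻¹ + q⁻¹ = 1 := hpq.inv_add_inv_eq_one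
  rcases hX.eq_or_lt with hX0 | hXpos
  · have hRHS : 2 * (X ^ (1 / p) * Y ^ (1 / q)) = 0 := by
      rw [← hX0, Real.zero_rpow (by positivity)]; ring
    rw [hRHS]
    refine le_of_forall_pos_le_add (fun ε hε => ?_)
    set t : ℝ := max 1 (Y / ε) with htdef
    have ht1 : (1:ℝ) ≤ t := le_max_left _ _
    have ht : 0 < t := lt_of_lt_of_le one_pos ht1
    have htq : t ≤ t ^ q := by
      have := Real.rpow_le_rpow_of_exponent_le ht1 hpq.symm.lt.le
      rwa [Real.rpow_one] at this
    have htqpos : 0 < t ^ q := Real.rpow_pos_of_pos ht q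
    have hYt : Y / t ^ q ≤ ε := by
      rw [div_le_iff₀ htqpos]
      have h1 : Y / ε ≤ t := le_max_right _ _
      have h2 : Y ≤ ε * t := by rwa [div_le_iff₀ hε, mul_comm] at h1
      calc Y ≤ ε * t := h2
        _ ≤ ε * t ^ q := by nlinarith
    have := hL t ht
    rw [← hX0] at this
    simp only [mul_zero, zero_add] at this
    linarith
  rcases hY.eq_or_lt with hY0 | hYpos
  · have hRHS : 2 * (X ^ (1 / p) * Y ^ (1 / q)) = 0 := by
      rw [← hY0, Real.zero_rpow (by positivity)]; ring
    rw [hRHS]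
    refine le_of_forall_pos_le_add (fun ε hε => ?_)
    set t : ℝ := min 1 (ε / X) with htdef
    have ht : 0 < t := lt_min one_pos (by positivity)
    have ht1 : t ≤ 1 := min_le_left _ _
    have htp : t ^ p ≤ t := by
      have := Real.rpow_le_rpow_of_exponent_ge ht ht1 hpq.lt.le
      rwa [Real.rpow_one] at this
    have hXt : t ^ p * X ≤ ε := by
      have h1 : t ≤ ε / X := min_le_right _ _
      have h2 : t * X ≤ ε := by rwa [le_div_iff₀ hXpos] at h1
      nlinarith [Real.rpow_nonneg ht.le p]
    have := hL t ht
    rw [← hY0] at this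
    simp only [zero_div, add_zero] at this
    linarith
  · -- both positive
    have hr : 0 < Y / X := div_pos hYpos hXpos
    set t : ℝ := (Y / X) ^ ((p + q)⁻¹) with htdef
    have ht : 0 < t := Real.rpow_pos_of_pos hr _
    have hsum : p + q = p * q := by field_simp at hconj; linarith
    have hpq0 : (0:ℝ) < p + q := by positivity
    have e1 : t ^ p = (Y / X) ^ q⁻¹ := by
      rw [htdef, ← Real.rpow_mul hr.le]
      congr 1
      field_simp
      linarith
    have e2 : t ^ q = (Y / X) ^ p⁻¹ := by
      rw [htdef, ← Real.rpow_mul hr.le]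
      congr 1
      field_simp
      nlinarith [hsum]
    have hXsplit : X = X ^ q⁻¹ * X ^ p⁻¹ := by
      rw [← Real.rpow_add hXpos, add_comm, hconj, Real.rpow_one]
    have hYsplit : Y = Y ^ p⁻¹ * Y ^ q⁻¹ := by
      rw [← Real.rpow_add hYpos, hconj, Real.rpow_one]
    have e3 : t ^ p * X = X ^ p⁻¹ * Y ^ q⁻¹ := by
      rw [e1, Real.div_rpow hY hXpos.le, div_mul_eq_mul_div,
        div_eq_iff (ne_of_gt (Real.rpow_pos_of_pos hXpos _))]
      nth_rewrite 1 [hXsplit]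
      ring
    have e4 : Y / t ^ q = X ^ p⁻¹ * Y ^ q⁻¹ := by
      rw [e2, Real.div_rpow hY hXpos.le, div_div_eq_mul_div,
        div_eq_iff (ne_of_gt (Real.rpow_pos_of_pos hYpos _))]
      nth_rewrite 1 [hYsplit]
      ring
    have := hL t ht
    rw [e3, e4] at this
    have : L ≤ 2 * (X ^ p⁻¹ * Y ^ q⁻¹) := by linarith
    simpa [one_div] using this

private lemma opt_bound' {p q c1 L X Y : ℝ} (hpq : p.HolderConjugate q) (hc1 : 0 < c1)
    (hX : 0 ≤ X) (hY : 0 ≤ Y)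
    (hL : ∀ t : ℝ, 0 < t → L ≤ c1 * (t ^ p * X + Y / t ^ q)) :
    L ≤ 2 * c1 * (X ^ (1 / p) * Y ^ (1 / q)) := by
  have h : L / c1 ≤ 2 * (X ^ (1 / p) * Y ^ (1 / q)) := by
    refine opt_bound hpq hX hY (fun t ht => ?_)
    exact (div_le_iff₀ hc1).mpr ((hL t ht).trans_eq (mul_comm _ _))
  rw [div_le_iff₀ hc1] at h
  exact h.trans_eq (by ring)

set_option maxHeartbeats 1000000 in
private lemma mat_facts {lam Lam : ℝ} (hlam : 0 < lam) (hLam : 0 < Lam)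
    (M : Matrix (Fin 2) (Fin 2) ℝ)
    (hell : ∀ ξ : Fin 2 → ℝ, lam * (ξ 0 ^ 2 + ξ 1 ^ 2) ≤
      M 0 0 * ξ 0 * ξ 0 + M 0 1 * ξ 0 * ξ 1 + (M 1 0 * ξ 1 * ξ 0 + M 1 1 * ξ 1 * ξ 1))
    (hbd : ∀ i j, |M i j| ≤ Lam) :
    lam ^ 2 ≤ M.det ∧ M.det ≤ 2 * Lam ^ 2 ∧ (∀ i j, |M⁻¹ i j| ≤ Lam / lam ^ 2) ∧
    ∀ u : Fin 2 → ℝ, lam * (u 0 ^ 2 + u 1 ^ 2) ≤ 2 * Lam ^ 2 *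
      (M⁻¹ 0 0 * u 0 * u 0 + M⁻¹ 0 1 * u 0 * u 1 +
        (M⁻¹ 1 0 * u 1 * u 0 + M⁻¹ 1 1 * u 1 * u 1)) := by
  have ha : lam ≤ M 0 0 := by have := hell ![1, 0]; simp at this; linarith
  have hd : lam ≤ M 1 1 := by have := hell ![0, 1]; simp at this; linarith
  set a := M 0 0 with ha'
  set b := M 0 1 with hb'
  set c := M 1 0 with hc'
  set d := M 1 1 with hd'
  have hB2 : (b + c) ^ 2 ≤ 4 * (a - lam) * (d - lam) := by
    have key := hell ![-(b + c), 2 * (a - lam)]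
    simp at key
    rcases eq_or_lt_of_le (by linarith : (0:ℝ) ≤ a - lam) with hA | hA
    · have hAa : a = lam := by linarith
      have hBz : b + c = 0 := by
        by_contra hB
        set t₀ : ℝ := (-(d - lam) - 1) / (b + c) with ht₀def
        have hbc : b * t₀ + c * t₀ = -(d - lam) - 1 := by
          rw [ht₀def]; field_simp
        have h2 := hell ![t₀, 1]
        simp at h2
        rw [hAa] at h2
        nlinarith [h2, hbc]
      rw [hBz]; nlinarith
    · nlinarith [key, hA, sq_nonneg (b + c)]
  have hdl : lam ^ 2 ≤ M.det := by
    rw [Matrix.det_fin_two]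
    nlinarith [sq_nonneg (b - c), hB2, ha, hd, hlam]
  have hdu : M.det ≤ 2 * Lam ^ 2 := by
    rw [Matrix.det_fin_two]
    have h00 := abs_le.mp (hbd 0 0)
    have h11 := abs_le.mp (hbd 1 1)
    have habs : |b| * |c| ≤ Lam * Lam :=
      mul_le_mul (hbd 0 1) (hbd 1 0) (abs_nonneg _) hLam.le
    rw [← abs_mul] at habs
    nlinarith [mul_le_mul h00.2 h11.2 (by linarith) hLam.le, neg_abs_le (b * c), habs]
  have hdetpos : 0 < M.det := lt_of_lt_of_le (by positivity) hdl
  have hinv : M⁻¹ = M.det⁻¹ • !![d, -b; -c, a] := by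
    rw [Matrix.inv_def, Matrix.adjugate_fin_two, Ring.inverse_eq_inv]
  have h00i : M⁻¹ 0 0 = M.det⁻¹ * d := by rw [hinv]; simp
  have h01i : M⁻¹ 0 1 = M.det⁻¹ * (-b) := by rw [hinv]; simp
  have h10i : M⁻¹ 1 0 = M.det⁻¹ * (-c) := by rw [hinv]; simp
  have h11i : M⁻¹ 1 1 = M.det⁻¹ * a := by rw [hinv]; simp
  have hent : ∀ i j, |M⁻¹ i j| ≤ Lam / lam ^ 2 := by
    have base : ∀ z : ℝ, |z| ≤ Lam → |M.det⁻¹ * z| ≤ Lam / lam ^ 2 := by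
      intro z hz
      rw [abs_mul, abs_inv, abs_of_pos hdetpos, inv_mul_eq_div]
      exact div_le_div₀ hLam.le hz (by positivity) hdl
    intro i j
    fin_cases i <;> fin_cases j <;> simp only [Fin.zero_eta, Fin.mk_one, Fin.isValue]
    · rw [h00i]; exact base d (hbd 1 1)
    · rw [h01i]; exact base (-b) (by rw [abs_neg]; exact hbd 0 1)
    · rw [h10i]; exact base (-c) (by rw [abs_neg]; exact hbd 1 0)
    · rw [h11i]; exact base a (hbd 0 0)
  refine ⟨hdl, hdu, hent, fun u => ?_⟩
  have hq := hell ![u 1, -(u 0)]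
  simp at hq
  rw [h00i, h01i, h10i, h11i]
  have hrw : (2:ℝ) * Lam ^ 2 * (M.det⁻¹ * d * u 0 * u 0 + M.det⁻¹ * (-b) * u 0 * u 1 +
      (M.det⁻¹ * (-c) * u 1 * u 0 + M.det⁻¹ * a * u 1 * u 1)) =
      (2 * Lam ^ 2 * (d * u 0 * u 0 - b * u 0 * u 1 - c * u 1 * u 0 + a * u 1 * u 1)) /
        M.det := by
    field_simp
    ring
  rw [hrw, le_div_iff₀ hdetpos]
  have hs0 : (0:ℝ) ≤ u 0 ^ 2 + u 1 ^ 2 := by positivity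
  nlinarith [hq, hdu, mul_le_mul_of_nonneg_left hdu (mul_nonneg hlam.le hs0),
    mul_le_mul_of_nonneg_left hq (by positivity : (0:ℝ) ≤ 2 * Lam ^ 2)]


private lemma quad_nonneg {lam Lam s w : ℝ} (hlam : 0 < lam) (hLam : 0 < Lam)
    (hs : 0 ≤ s) (h : lam * s ≤ 2 * Lam ^ 2 * w) : 0 ≤ w := by
  nlinarith [mul_nonneg hlam.le hs, mul_pos (by norm_num : (0:ℝ) < 2) (pow_pos hLam 2)]

private lemma grad_prod {lam Lam w w' A B C D : ℝ} (hlam : 0 < lam) (hLam : 0 < Lam)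
    (h1 : lam * (A ^ 2 + B ^ 2) ≤ 2 * Lam ^ 2 * w)
    (h2 : lam * (C ^ 2 + D ^ 2) ≤ 2 * Lam ^ 2 * w')
    (hw : 0 ≤ w) (hw' : 0 ≤ w') :
    (|A| + |B|) * (|C| + |D|) ≤ (4 * Lam ^ 2 / lam) * (Real.sqrt w * Real.sqrt w') := by
  have hL2 : lam * (|A| + |B|) ^ 2 ≤ 4 * Lam ^ 2 * w := by
    nlinarith [sq_abs A, sq_abs B, sq_nonneg (|A| - |B|)]
  have hL2' : lam * (|C| + |D|) ^ 2 ≤ 4 * Lam ^ 2 * w' := by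
    nlinarith [sq_abs C, sq_abs D, sq_nonneg (|C| - |D|)]
  have hrsq : Real.sqrt w ^ 2 = w := Real.sq_sqrt hw
  have hr'sq : Real.sqrt w' ^ 2 = w' := Real.sq_sqrt hw'
  set c3 : ℝ := 4 * Lam ^ 2 / lam with hc3def
  have hc3pos : 0 < c3 := by rw [hc3def]; positivity
  have hc3sq : c3 ^ 2 * lam ^ 2 = 16 * Lam ^ 4 := by rw [hc3def]; field_simp; ring
  have hsq : ((|A| + |B|) * (|C| + |D|)) ^ 2 ≤ (c3 * (Real.sqrt w * Real.sqrt w')) ^ 2 := by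
    have m := mul_le_mul hL2 hL2' (by positivity) (by positivity)
    have e : (c3 * (Real.sqrt w * Real.sqrt w')) ^ 2 = c3 ^ 2 * w * w' := by
      rw [mul_pow, mul_pow, hrsq, hr'sq]; ring
    rw [e]
    have hfin : lam ^ 2 * ((|A| + |B|) * (|C| + |D|)) ^ 2 ≤
        lam ^ 2 * (c3 ^ 2 * w * w') := by
      nlinarith [m, hc3sq, mul_nonneg hw hw']
    exact le_of_mul_le_mul_left hfin (by positivity)
  calc (|A| + |B|) * (|C| + |D|) = Real.sqrt (((|A| + |B|) * (|C| + |D|)) ^ 2) :=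
        (Real.sqrt_sq (by positivity)).symm
    _ ≤ Real.sqrt ((c3 * (Real.sqrt w * Real.sqrt w')) ^ 2) := Real.sqrt_le_sqrt hsq
    _ = c3 * (Real.sqrt w * Real.sqrt w') := Real.sqrt_sq (by positivity)

private lemma integral_diff_bound {S : Type*} [MeasurableSpace S] {μ : Measure S}
    {A B P Q : S → ℝ} {c1 p q : ℝ} (hpq : p.HolderConjugate q) (hc1 : 0 < c1)
    (hA : Integrable A μ) (hB : Integrable B μ) (hP : Integrable P μ) (hQ : Integrable Q μ)
    (hP0 : ∀ x, 0 ≤ P x) (hQ0 : ∀ x, 0 ≤ Q x)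
    (hkey : ∀ t : ℝ, 0 < t → ∀ x, |A x - B x| ≤ c1 * (t ^ p * P x + Q x / t ^ q)) :
    |(∫ x, A x ∂μ) - ∫ x, B x ∂μ| ≤
      2 * c1 * ((∫ x, P x ∂μ) ^ (1 / p) * (∫ x, Q x ∂μ) ^ (1 / q)) := by
  have hX : 0 ≤ ∫ x, P x ∂μ := integral_nonneg hP0
  have hY : 0 ≤ ∫ x, Q x ∂μ := integral_nonneg hQ0
  refine opt_bound' hpq hc1 hX hY (fun t ht => ?_)
  rw [← integral_sub hA hB]
  have hdom : Integrable (fun x => c1 * t ^ p * P x + c1 / t ^ q * Q x) μ :=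
    (hP.const_mul _).add (hQ.const_mul _)
  calc |∫ x, (A x - B x) ∂μ|
      ≤ ∫ x, (c1 * t ^ p * P x + c1 / t ^ q * Q x) ∂μ := by
        rw [← Real.norm_eq_abs]
        refine norm_integral_le_of_norm_le hdom (ae_of_all _ (fun x => ?_))
        rw [Real.norm_eq_abs]
        exact (hkey t ht x).trans_eq (by ring)
    _ = c1 * (t ^ p * (∫ x, P x ∂μ) + (∫ x, Q x ∂μ) / t ^ q) := by
        rw [integral_add (hP.const_mul _) (hQ.const_mul _),
          MeasureTheory.integral_const_mul, MeasureTheory.integral_const_mul]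
        ring

set_option maxHeartbeats 2000000 in
/-- Geometric perturbation estimates for lifted integrals.  Working in fixed local
coordinates (with coordinate measure `μ`), the surface `S` carries the metric `σ` and
the lifted polyhedral surface `S_h` the metric `g` with `g = σ + O(h²)`,
`g⁻¹ = σ⁻¹ + O(h²)`, `det g = det σ + O(h²)` (as provided by the graph representation
`|Dψ|_σ ≤ ch`, `|ψ| ≤ ch²`).  Then for `f ∈ W^{1,p}(S)`, `g₀ ∈ W^{1,p*}(S)` with
`1/p + 1/p* = 1`:
`∫_S ⟨Df,Dg₀⟩ = ∫_{S_h} ⟨Df̂,Dĝ₀⟩ + O(h²)‖f‖_{W^{1,p}}‖g₀‖_{W^{1,p*}}`, and for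
`f ∈ L¹(S)`: `∫_S f = ∫_{S_h} f̂ + O(h²)‖f‖_{L¹(S)}`. -/
theorem lifted_integral_perturbation
    {S : Type*} [MeasurableSpace S] (μ : Measure S)
    (σ g : S → Matrix (Fin 2) (Fin 2) ℝ)
    (lam Lam : ℝ) (hlam : 0 < lam) (hLam : 0 < Lam)
    (hell : ∀ x (ξ : Fin 2 → ℝ), lam * (∑ i, ξ i ^ 2) ≤ ∑ i, ∑ j, σ x i j * ξ i * ξ j)
    (hbd : ∀ x i j, |σ x i j| ≤ Lam)
    (c : ℝ) (hc : 0 < c) :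
    ∃ C : ℝ, 0 < C ∧ ∀ h : ℝ, 0 < h → h ≤ 1 →
      -- metric coefficients of `S_h` differ from those of `S` by `O(h²)`
      (∀ x i j, |g x i j - σ x i j| ≤ c * h ^ 2) →
      (∀ x i j, |(g x)⁻¹ i j - (σ x)⁻¹ i j| ≤ c * h ^ 2) →
      (∀ x, |(g x).det - (σ x).det| ≤ c * h ^ 2) →
      (∀ (p q : ℝ), 1 ≤ p → 1 ≤ q → 1 / p + 1 / q = 1 →
        ∀ (f g₀ : S → ℝ) (Df Dg₀ : S → Fin 2 → ℝ),
          Integrable (fun x => (∑ i, ∑ j, (σ x)⁻¹ i j * Df x i * Dg₀ x j) *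
            Real.sqrt (σ x).det) μ →
          Integrable (fun x => (∑ i, ∑ j, (g x)⁻¹ i j * Df x i * Dg₀ x j) *
            Real.sqrt (g x).det) μ →
          Integrable (fun x => (|f x| ^ p +
            (∑ i, ∑ j, (σ x)⁻¹ i j * Df x i * Df x j) ^ (p / 2)) * Real.sqrt (σ x).det) μ →
          Integrable (fun x => (|g₀ x| ^ q +
            (∑ i, ∑ j, (σ x)⁻¹ i j * Dg₀ x i * Dg₀ x j) ^ (q / 2)) * Real.sqrt (σ x).det) μ →
          |(∫ x, (∑ i, ∑ j, (σ x)⁻¹ i j * Df x i * Dg₀ x j) * Real.sqrt (σ x).det ∂μ) -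
            (∫ x, (∑ i, ∑ j, (g x)⁻¹ i j * Df x i * Dg₀ x j) * Real.sqrt (g x).det ∂μ)| ≤
            C * h ^ 2 *
              ((∫ x, (|f x| ^ p + (∑ i, ∑ j, (σ x)⁻¹ i j * Df x i * Df x j) ^ (p / 2)) *
                  Real.sqrt (σ x).det ∂μ) ^ (1 / p)) *
              ((∫ x, (|g₀ x| ^ q + (∑ i, ∑ j, (σ x)⁻¹ i j * Dg₀ x i * Dg₀ x j) ^ (q / 2)) *
                  Real.sqrt (σ x).det ∂μ) ^ (1 / q))) ∧
      (∀ f : S → ℝ,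
        Integrable (fun x => f x * Real.sqrt (σ x).det) μ →
        Integrable (fun x => f x * Real.sqrt (g x).det) μ →
        Integrable (fun x => |f x| * Real.sqrt (σ x).det) μ →
        |(∫ x, f x * Real.sqrt (σ x).det ∂μ) - (∫ x, f x * Real.sqrt (g x).det ∂μ)| ≤
          C * h ^ 2 * ∫ x, |f x| * Real.sqrt (σ x).det ∂μ) := by
  have hellx : ∀ x (ξ : Fin 2 → ℝ), lam * (ξ 0 ^ 2 + ξ 1 ^ 2) ≤
      σ x 0 0 * ξ 0 * ξ 0 + σ x 0 1 * ξ 0 * ξ 1 +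
        (σ x 1 0 * ξ 1 * ξ 0 + σ x 1 1 * ξ 1 * ξ 1) := by
    intro x ξ
    have := hell x ξ
    simpa [Fin.sum_univ_two] using this
  have hfacts := fun x => mat_facts hlam hLam (σ x) (hellx x) (hbd x)
  set SB : ℝ := Real.sqrt (2 * Lam ^ 2) with hSB
  set K1 : ℝ := c * SB + (Lam / lam ^ 2 + c) * (c / lam) with hK1
  set C0 : ℝ := K1 * (4 * Lam ^ 2) / lam ^ 2 with hC0
  have hSBpos : 0 < SB := by rw [hSB]; positivity
  have hK1pos : 0 < K1 := by rw [hK1]; positivity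
  have hC0pos : 0 < C0 := by rw [hC0]; positivity
  have hclam : 0 < c / lam ^ 2 := by positivity
  refine ⟨2 * C0 + c / lam ^ 2 + 1, by linarith, ?_⟩
  intro h hh0 hh1 hgσ hginv hgdet
  have hh2 : 0 < h ^ 2 := by positivity
  have hh21 : h ^ 2 ≤ 1 := by nlinarith
  constructor
  · -- first part
    intro p q hp hq hpq1 f g₀ Df Dg₀ hI1 hI2 hIP hIQ
    have hqpos : (0:ℝ) < q := by linarith
    have hppos : (0:ℝ) < p := by linarith
    have hp1 : 1 < p := by
      by_contra hcon
      push_neg at hcon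
      have hpe : p = 1 := le_antisymm hcon hp
      rw [hpe] at hpq1
      norm_num at hpq1
      exact ne_of_gt hqpos hpq1
    have hpq' : p.HolderConjugate q := Real.holderConjugate_iff.mpr ⟨hp1, by simpa [one_div] using hpq1⟩
    simp only [Fin.sum_univ_two] at hI1 hI2 hIP hIQ ⊢
    have hc1 : (0:ℝ) < C0 * h ^ 2 := by positivity
    have key : ∀ t : ℝ, 0 < t → ∀ x,
        |((σ x)⁻¹ 0 0 * Df x 0 * Dg₀ x 0 + (σ x)⁻¹ 0 1 * Df x 0 * Dg₀ x 1 +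
            ((σ x)⁻¹ 1 0 * Df x 1 * Dg₀ x 0 + (σ x)⁻¹ 1 1 * Df x 1 * Dg₀ x 1)) *
            Real.sqrt (σ x).det -
          ((g x)⁻¹ 0 0 * Df x 0 * Dg₀ x 0 + (g x)⁻¹ 0 1 * Df x 0 * Dg₀ x 1 +
            ((g x)⁻¹ 1 0 * Df x 1 * Dg₀ x 0 + (g x)⁻¹ 1 1 * Df x 1 * Dg₀ x 1)) *
            Real.sqrt (g x).det| ≤
        (C0 * h ^ 2) * (t ^ p * ((|f x| ^ p +
            ((σ x)⁻¹ 0 0 * Df x 0 * Df x 0 + (σ x)⁻¹ 0 1 * Df x 0 * Df x 1 +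
              ((σ x)⁻¹ 1 0 * Df x 1 * Df x 0 + (σ x)⁻¹ 1 1 * Df x 1 * Df x 1)) ^ (p / 2)) *
            Real.sqrt (σ x).det) +
          ((|g₀ x| ^ q +
            ((σ x)⁻¹ 0 0 * Dg₀ x 0 * Dg₀ x 0 + (σ x)⁻¹ 0 1 * Dg₀ x 0 * Dg₀ x 1 +
              ((σ x)⁻¹ 1 0 * Dg₀ x 1 * Dg₀ x 0 + (σ x)⁻¹ 1 1 * Dg₀ x 1 * Dg₀ x 1)) ^ (q / 2)) *
            Real.sqrt (σ x).det) / t ^ q) := by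
      intro t ht x
      obtain ⟨hdl, hdu, hent, hposQ⟩ := hfacts x
      set s1 : ℝ := Real.sqrt (σ x).det with hs1def
      set s2 : ℝ := Real.sqrt (g x).det with hs2def
      set w : ℝ := (σ x)⁻¹ 0 0 * Df x 0 * Df x 0 + (σ x)⁻¹ 0 1 * Df x 0 * Df x 1 +
          ((σ x)⁻¹ 1 0 * Df x 1 * Df x 0 + (σ x)⁻¹ 1 1 * Df x 1 * Df x 1) with hwdef
      set w' : ℝ := (σ x)⁻¹ 0 0 * Dg₀ x 0 * Dg₀ x 0 + (σ x)⁻¹ 0 1 * Dg₀ x 0 * Dg₀ x 1 +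
          ((σ x)⁻¹ 1 0 * Dg₀ x 1 * Dg₀ x 0 + (σ x)⁻¹ 1 1 * Dg₀ x 1 * Dg₀ x 1) with hw'def
      have hLsq : (0:ℝ) < 2 * Lam ^ 2 := by positivity
      have hqf := hposQ (Df x)
      have hqf' := hposQ (Dg₀ x)
      rw [← hwdef] at hqf
      rw [← hw'def] at hqf'
      have hw0 : 0 ≤ w := quad_nonneg hlam hLam (by positivity) hqf
      have hw'0 : 0 ≤ w' := quad_nonneg hlam hLam (by positivity) hqf'
      have hs1nn : 0 ≤ s1 := Real.sqrt_nonneg _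
      have hs2nn : 0 ≤ s2 := Real.sqrt_nonneg _
      have hs1lam : lam ≤ s1 := by
        have : Real.sqrt (lam ^ 2) ≤ s1 := Real.sqrt_le_sqrt hdl
        rwa [Real.sqrt_sq hlam.le] at this
      have hs1SB : s1 ≤ SB := Real.sqrt_le_sqrt hdu
      have hss : |s1 - s2| ≤ (c * h ^ 2) / lam := sqrt_close hlam hdl (by rw [abs_sub_comm]; exact hgdet x)
      have hcoef : ∀ i j, |(σ x)⁻¹ i j * s1 - (g x)⁻¹ i j * s2| ≤ K1 * h ^ 2 := by
        intro i j
        have e1 : |(σ x)⁻¹ i j - (g x)⁻¹ i j| ≤ c * h ^ 2 := by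
          rw [abs_sub_comm]; exact hginv x i j
        have e2 : |(σ x)⁻¹ i j| ≤ Lam / lam ^ 2 := hent i j
        have e3 : |(g x)⁻¹ i j| ≤ Lam / lam ^ 2 + c := by
          have h4 := abs_sub_abs_le_abs_sub ((g x)⁻¹ i j) ((σ x)⁻¹ i j)
          have e1' := hginv x i j
          have h5 : c * h ^ 2 ≤ c := mul_le_of_le_one_right hc.le hh21
          linarith
        have erw : (σ x)⁻¹ i j * s1 - (g x)⁻¹ i j * s2 =
            ((σ x)⁻¹ i j - (g x)⁻¹ i j) * s1 + (g x)⁻¹ i j * (s1 - s2) := by ring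
        calc |(σ x)⁻¹ i j * s1 - (g x)⁻¹ i j * s2|
            ≤ |((σ x)⁻¹ i j - (g x)⁻¹ i j) * s1| + |(g x)⁻¹ i j * (s1 - s2)| := by
              rw [erw]; exact abs_add_le _ _
          _ = |(σ x)⁻¹ i j - (g x)⁻¹ i j| * |s1| + |(g x)⁻¹ i j| * |s1 - s2| := by
              rw [abs_mul, abs_mul]
          _ ≤ (c * h ^ 2) * SB + (Lam / lam ^ 2 + c) * ((c * h ^ 2) / lam) := by
              refine add_le_add (mul_le_mul e1 ?_ (abs_nonneg _) (by positivity))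
                (mul_le_mul e3 hss (abs_nonneg _) (by positivity))
              rw [abs_of_nonneg hs1nn]; exact hs1SB
          _ ≤ K1 * h ^ 2 := le_of_eq (by rw [hK1]; ring)
      have hsw : (|Df x 0| + |Df x 1|) * (|Dg₀ x 0| + |Dg₀ x 1|) ≤
          (4 * Lam ^ 2 / lam) * (Real.sqrt w * Real.sqrt w') :=
        grad_prod hlam hLam hqf hqf' hw0 hw'0
      have hyoung : Real.sqrt w * Real.sqrt w' ≤
          t ^ p * w ^ (p / 2) + w' ^ (q / 2) / t ^ q := by
        have hy := young_t (Real.sqrt_nonneg w) (Real.sqrt_nonneg w') hpq' ht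
        have ew : Real.sqrt w ^ p = w ^ (p / 2) := by
          rw [Real.sqrt_eq_rpow, ← Real.rpow_mul hw0]
          congr 1; ring
        have ew' : Real.sqrt w' ^ q = w' ^ (q / 2) := by
          rw [Real.sqrt_eq_rpow, ← Real.rpow_mul hw'0]
          congr 1; ring
        rwa [ew, ew'] at hy
      have habsf : 0 ≤ |f x| ^ p := Real.rpow_nonneg (abs_nonneg _) _
      have habsg : 0 ≤ |g₀ x| ^ q := Real.rpow_nonneg (abs_nonneg _) _
      have hwp : 0 ≤ w ^ (p / 2) := Real.rpow_nonneg hw0 _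
      have hw'q : 0 ≤ w' ^ (q / 2) := Real.rpow_nonneg hw'0 _
      have htp : 0 ≤ t ^ p := (Real.rpow_pos_of_pos ht p).le
      have htq : 0 < t ^ q := Real.rpow_pos_of_pos ht q
      have erw4 : ((σ x)⁻¹ 0 0 * Df x 0 * Dg₀ x 0 + (σ x)⁻¹ 0 1 * Df x 0 * Dg₀ x 1 +
            ((σ x)⁻¹ 1 0 * Df x 1 * Dg₀ x 0 + (σ x)⁻¹ 1 1 * Df x 1 * Dg₀ x 1)) * s1 -
          ((g x)⁻¹ 0 0 * Df x 0 * Dg₀ x 0 + (g x)⁻¹ 0 1 * Df x 0 * Dg₀ x 1 +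
            ((g x)⁻¹ 1 0 * Df x 1 * Dg₀ x 0 + (g x)⁻¹ 1 1 * Df x 1 * Dg₀ x 1)) * s2 =
          ((σ x)⁻¹ 0 0 * s1 - (g x)⁻¹ 0 0 * s2) * (Df x 0 * Dg₀ x 0) +
          ((σ x)⁻¹ 0 1 * s1 - (g x)⁻¹ 0 1 * s2) * (Df x 0 * Dg₀ x 1) +
          (((σ x)⁻¹ 1 0 * s1 - (g x)⁻¹ 1 0 * s2) * (Df x 1 * Dg₀ x 0) +
           ((σ x)⁻¹ 1 1 * s1 - (g x)⁻¹ 1 1 * s2) * (Df x 1 * Dg₀ x 1)) := by ring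
      have step1 : |((σ x)⁻¹ 0 0 * Df x 0 * Dg₀ x 0 + (σ x)⁻¹ 0 1 * Df x 0 * Dg₀ x 1 +
            ((σ x)⁻¹ 1 0 * Df x 1 * Dg₀ x 0 + (σ x)⁻¹ 1 1 * Df x 1 * Dg₀ x 1)) * s1 -
          ((g x)⁻¹ 0 0 * Df x 0 * Dg₀ x 0 + (g x)⁻¹ 0 1 * Df x 0 * Dg₀ x 1 +
            ((g x)⁻¹ 1 0 * Df x 1 * Dg₀ x 0 + (g x)⁻¹ 1 1 * Df x 1 * Dg₀ x 1)) * s2| ≤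
          K1 * h ^ 2 * ((|Df x 0| + |Df x 1|) * (|Dg₀ x 0| + |Dg₀ x 1|)) := by
        rw [erw4]
        have bound : ∀ (i j : Fin 2) (z : ℝ),
            |((σ x)⁻¹ i j * s1 - (g x)⁻¹ i j * s2) * z| ≤ K1 * h ^ 2 * |z| := by
          intro i j z
          rw [abs_mul]
          exact mul_le_mul_of_nonneg_right (hcoef i j) (abs_nonneg _)
        refine le_trans (abs_add_le _ _) ?_
        refine le_trans (add_le_add (abs_add_le _ _) (abs_add_le _ _)) ?_
        refine le_trans (add_le_add (add_le_add (bound 0 0 _) (bound 0 1 _))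
          (add_le_add (bound 1 0 _) (bound 1 1 _))) ?_
        rw [abs_mul, abs_mul, abs_mul, abs_mul]
        exact le_of_eq (by ring)
      calc |((σ x)⁻¹ 0 0 * Df x 0 * Dg₀ x 0 + (σ x)⁻¹ 0 1 * Df x 0 * Dg₀ x 1 +
            ((σ x)⁻¹ 1 0 * Df x 1 * Dg₀ x 0 + (σ x)⁻¹ 1 1 * Df x 1 * Dg₀ x 1)) * s1 -
          ((g x)⁻¹ 0 0 * Df x 0 * Dg₀ x 0 + (g x)⁻¹ 0 1 * Df x 0 * Dg₀ x 1 +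
            ((g x)⁻¹ 1 0 * Df x 1 * Dg₀ x 0 + (g x)⁻¹ 1 1 * Df x 1 * Dg₀ x 1)) * s2|
          ≤ K1 * h ^ 2 * ((|Df x 0| + |Df x 1|) * (|Dg₀ x 0| + |Dg₀ x 1|)) := step1
        _ ≤ K1 * h ^ 2 * ((4 * Lam ^ 2 / lam) * (Real.sqrt w * Real.sqrt w')) :=
            mul_le_mul_of_nonneg_left hsw (by positivity)
        _ ≤ K1 * h ^ 2 * ((4 * Lam ^ 2 / lam) *
              ((s1 / lam) * (Real.sqrt w * Real.sqrt w'))) := by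
            refine mul_le_mul_of_nonneg_left
              (mul_le_mul_of_nonneg_left ?_ (by positivity)) (by positivity)
            refine le_mul_of_one_le_left (by positivity) ?_
            rw [le_div_iff₀ hlam]
            linarith
        _ ≤ K1 * h ^ 2 * ((4 * Lam ^ 2 / lam) *
              ((s1 / lam) * (t ^ p * w ^ (p / 2) + w' ^ (q / 2) / t ^ q))) := by
            refine mul_le_mul_of_nonneg_left (mul_le_mul_of_nonneg_left
              (mul_le_mul_of_nonneg_left hyoung (by positivity)) (by positivity))
              (by positivity)
        _ = (C0 * h ^ 2) * (t ^ p * (w ^ (p / 2) * s1) + (w' ^ (q / 2) * s1) / t ^ q) := by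
            rw [hC0]
            field_simp
        _ ≤ (C0 * h ^ 2) * (t ^ p * ((|f x| ^ p + w ^ (p / 2)) * s1) +
              ((|g₀ x| ^ q + w' ^ (q / 2)) * s1) / t ^ q) := by
            refine mul_le_mul_of_nonneg_left (add_le_add
              (mul_le_mul_of_nonneg_left ?_ htp) ?_) (by positivity)
            · linarith [mul_nonneg habsf hs1nn]
            · refine (div_le_div_iff_of_pos_right htq).mpr ?_
              linarith [mul_nonneg habsg hs1nn]
    have hP0 : ∀ x, 0 ≤ (|f x| ^ p +
        ((σ x)⁻¹ 0 0 * Df x 0 * Df x 0 + (σ x)⁻¹ 0 1 * Df x 0 * Df x 1 +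
          ((σ x)⁻¹ 1 0 * Df x 1 * Df x 0 + (σ x)⁻¹ 1 1 * Df x 1 * Df x 1)) ^ (p / 2)) *
        Real.sqrt (σ x).det := by
      intro x
      obtain ⟨hdl, hdu, hent, hposQ⟩ := hfacts x
      have hqf := hposQ (Df x)
      have hw0 : 0 ≤ (σ x)⁻¹ 0 0 * Df x 0 * Df x 0 + (σ x)⁻¹ 0 1 * Df x 0 * Df x 1 +
          ((σ x)⁻¹ 1 0 * Df x 1 * Df x 0 + (σ x)⁻¹ 1 1 * Df x 1 * Df x 1) :=
        quad_nonneg hlam hLam (by positivity) hqf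
      exact mul_nonneg (add_nonneg (Real.rpow_nonneg (abs_nonneg _) _)
        (Real.rpow_nonneg hw0 _)) (Real.sqrt_nonneg _)
    have hQ0 : ∀ x, 0 ≤ (|g₀ x| ^ q +
        ((σ x)⁻¹ 0 0 * Dg₀ x 0 * Dg₀ x 0 + (σ x)⁻¹ 0 1 * Dg₀ x 0 * Dg₀ x 1 +
          ((σ x)⁻¹ 1 0 * Dg₀ x 1 * Dg₀ x 0 + (σ x)⁻¹ 1 1 * Dg₀ x 1 * Dg₀ x 1)) ^ (q / 2)) *
        Real.sqrt (σ x).det := by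
      intro x
      obtain ⟨hdl, hdu, hent, hposQ⟩ := hfacts x
      have hqf := hposQ (Dg₀ x)
      have hw0 : 0 ≤ (σ x)⁻¹ 0 0 * Dg₀ x 0 * Dg₀ x 0 + (σ x)⁻¹ 0 1 * Dg₀ x 0 * Dg₀ x 1 +
          ((σ x)⁻¹ 1 0 * Dg₀ x 1 * Dg₀ x 0 + (σ x)⁻¹ 1 1 * Dg₀ x 1 * Dg₀ x 1) :=
        quad_nonneg hlam hLam (by positivity) hqf
      exact mul_nonneg (add_nonneg (Real.rpow_nonneg (abs_nonneg _) _)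
        (Real.rpow_nonneg hw0 _)) (Real.sqrt_nonneg _)
    refine le_trans (integral_diff_bound hpq' hc1 hI1 hI2 hIP hIQ hP0 hQ0 key) ?_
    have hXp : 0 ≤ (∫ x, (|f x| ^ p +
        ((σ x)⁻¹ 0 0 * Df x 0 * Df x 0 + (σ x)⁻¹ 0 1 * Df x 0 * Df x 1 +
          ((σ x)⁻¹ 1 0 * Df x 1 * Df x 0 + (σ x)⁻¹ 1 1 * Df x 1 * Df x 1)) ^ (p / 2)) *
        Real.sqrt (σ x).det ∂μ) ^ (1 / p) := Real.rpow_nonneg (integral_nonneg hP0) _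
    have hYq : 0 ≤ (∫ x, (|g₀ x| ^ q +
        ((σ x)⁻¹ 0 0 * Dg₀ x 0 * Dg₀ x 0 + (σ x)⁻¹ 0 1 * Dg₀ x 0 * Dg₀ x 1 +
          ((σ x)⁻¹ 1 0 * Dg₀ x 1 * Dg₀ x 0 + (σ x)⁻¹ 1 1 * Dg₀ x 1 * Dg₀ x 1)) ^ (q / 2)) *
        Real.sqrt (σ x).det ∂μ) ^ (1 / q) := Real.rpow_nonneg (integral_nonneg hQ0) _
    linarith [mul_nonneg (mul_nonneg (mul_nonneg hclam.le hh2.le) hXp) hYq,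
      mul_nonneg (mul_nonneg hh2.le hXp) hYq]
  · -- second part
    intro f hIσ hIg hIabs
    rw [← integral_sub hIσ hIg]
    have key2 : ∀ x, ‖f x * Real.sqrt (σ x).det - f x * Real.sqrt (g x).det‖ ≤
        (c / lam ^ 2 * h ^ 2) * (|f x| * Real.sqrt (σ x).det) := by
      intro x
      obtain ⟨hdl, hdu, hent, hposQ⟩ := hfacts x
      have hs1lam : lam ≤ Real.sqrt (σ x).det := by
        have : Real.sqrt (lam ^ 2) ≤ Real.sqrt (σ x).det := Real.sqrt_le_sqrt hdl
        rwa [Real.sqrt_sq hlam.le] at this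
      have hss : |Real.sqrt (σ x).det - Real.sqrt (g x).det| ≤ (c * h ^ 2) / lam :=
        sqrt_close hlam hdl (by rw [abs_sub_comm]; exact hgdet x)
      rw [← mul_sub, Real.norm_eq_abs, abs_mul]
      calc |f x| * |Real.sqrt (σ x).det - Real.sqrt (g x).det|
          ≤ |f x| * ((c * h ^ 2) / lam) := mul_le_mul_of_nonneg_left hss (abs_nonneg _)
        _ = (c / lam ^ 2 * h ^ 2) * (|f x| * lam) := by field_simp
        _ ≤ (c / lam ^ 2 * h ^ 2) * (|f x| * Real.sqrt (σ x).det) := by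
            refine mul_le_mul_of_nonneg_left
              (mul_le_mul_of_nonneg_left hs1lam (abs_nonneg _)) (by positivity)
    have hInn : 0 ≤ ∫ x, |f x| * Real.sqrt (σ x).det ∂μ :=
      integral_nonneg (fun x => mul_nonneg (abs_nonneg _) (Real.sqrt_nonneg _))
    calc |∫ x, (f x * Real.sqrt (σ x).det - f x * Real.sqrt (g x).det) ∂μ|
        ≤ ∫ x, (c / lam ^ 2 * h ^ 2) * (|f x| * Real.sqrt (σ x).det) ∂μ := by
          rw [← Real.norm_eq_abs]
          exact norm_integral_le_of_norm_le (hIabs.const_mul _) (ae_of_all _ key2)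
      _ = (c / lam ^ 2 * h ^ 2) * ∫ x, |f x| * Real.sqrt (σ x).det ∂μ :=
          MeasureTheory.integral_const_mul _ _
      _ ≤ (2 * C0 + c / lam ^ 2 + 1) * h ^ 2 * ∫ x, |f x| * Real.sqrt (σ x).det ∂μ := by
          have h1 : 0 ≤ C0 * h ^ 2 * ∫ x, |f x| * Real.sqrt (σ x).det ∂μ :=
            mul_nonneg (mul_nonneg hC0pos.le hh2.le) hInn
          have h2 : 0 ≤ h ^ 2 * ∫ x, |f x| * Real.sqrt (σ x).det ∂μ :=
            mul_nonneg hh2.le hInn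
          linarith [h1, h2]
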